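/- Let x ∈ ℝ^N and let T be an index set of the t largest absolute entries of x, T₁ an index set of the next t largest, T₂ the next t largest, etc. Then for every k ≥ 1, ‖x_{T_k}‖₂ ≤ ‖x_{T_{k-1}}‖₁ / √t, and consequently ∑_{k≥1} ‖x_{T_k}‖₂ ≤ ‖x‖₁ / √t. -/

import Mathlib

noncomputable def norm2 {ι : Type*} [Fintype ι] (x : ι → ℝ) : ℝ :=
  Real.sqrt (∑ i, x i ^ 2)

noncomputable def norm1 {ι : Type*} [Fintype ι] (x : ι → ℝ) : ℝ := ∑ i, |x i|

/-- Restriction of x to an index set T (zero off T). -/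
def restr {ι : Type*} [DecidableEq ι] (x : ι → ℝ) (T : Finset ι) : ι → ℝ :=
  fun i => if i ∈ T then x i else 0

lemma norm1_restr {ι : Type*} [Fintype ι] [DecidableEq ι] (x : ι → ℝ) (T : Finset ι) :
    norm1 (restr x T) = ∑ i ∈ T, |x i| := by
  unfold norm1 restr
  rw [← Finset.sum_subset (Finset.subset_univ T) (fun i _ hi => by simp [hi])]
  exact Finset.sum_congr rfl (fun i hi => by simp [hi])

lemma sq_sum_restr {ι : Type*} [Fintype ι] [DecidableEq ι] (x : ι → ℝ) (T : Finset ι) :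
    ∑ i, (restr x T i) ^ 2 = ∑ i ∈ T, (x i) ^ 2 := by
  unfold restr
  rw [← Finset.sum_subset (Finset.subset_univ T) (fun i _ hi => by simp [hi])]
  exact Finset.sum_congr rfl (fun i hi => by simp [hi])

lemma norm1_restr_nonneg {ι : Type*} [Fintype ι] [DecidableEq ι] (x : ι → ℝ) (T : Finset ι) :
    0 ≤ norm1 (restr x T) := by
  rw [norm1_restr]; positivity

/-- Block decomposition bound: if T₀, T₁, T₂, … partition the indices into blocks of
decreasing magnitudes, with |T_{k-1}| = t whenever T_k is nonempty, then
‖x_{T_k}‖₂ ≤ ‖x_{T_{k-1}}‖₁/√t for all k ≥ 1, and ∑_{k≥1} ‖x_{T_k}‖₂ ≤ ‖x‖₁/√t. -/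
theorem stmt2 (N t : ℕ) (ht : 0 < t) (x : Fin N → ℝ) (T : ℕ → Finset (Fin N))
    (hdisj : ∀ k l, k ≠ l → Disjoint (T k) (T l))
    (hunion : ∀ i : Fin N, ∃ k, i ∈ T k)
    (hcard_le : ∀ k, (T k).card ≤ t)
    (hcard_full : ∀ k, (T (k + 1)).Nonempty → (T k).card = t)
    (hdecr : ∀ k, ∀ i ∈ T k, ∀ j ∈ T (k + 1), |x j| ≤ |x i|) :
    (∀ k : ℕ, norm2 (restr x (T (k + 1))) ≤ norm1 (restr x (T k)) / Real.sqrt t) ∧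
    (∑' k : ℕ, norm2 (restr x (T (k + 1)))) ≤ norm1 x / Real.sqrt t := by
  have htR : (0:ℝ) < t := by exact_mod_cast ht
  have hsqrt : (0:ℝ) < Real.sqrt t := Real.sqrt_pos.mpr htR
  -- per-k bound
  have key : ∀ k : ℕ, norm2 (restr x (T (k + 1))) ≤ norm1 (restr x (T k)) / Real.sqrt t := by
    intro k
    set S := norm1 (restr x (T k)) with hS
    have hS0 : 0 ≤ S := norm1_restr_nonneg x (T k)
    rcases Finset.eq_empty_or_nonempty (T (k+1)) with he | hne
    · have : norm2 (restr x (T (k+1))) = 0 := by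
        unfold norm2
        rw [sq_sum_restr, he]
        simp
      rw [this]; positivity
    · have hcard : (T k).card = t := hcard_full k hne
      -- each entry bound
      have hentry : ∀ j ∈ T (k+1), |x j| ≤ S / t := by
        intro j hj
        have h1 : (t : ℝ) * |x j| ≤ S := by
          have : ∑ i ∈ T k, |x j| ≤ ∑ i ∈ T k, |x i| :=
            Finset.sum_le_sum (fun i hi => hdecr k i hi j hj)
          rw [Finset.sum_const, hcard, nsmul_eq_mul] at this
          rw [hS, norm1_restr]; exact this
        rw [div_eq_inv_mul, ← mul_le_mul_iff_right₀ htR]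
        calc (t:ℝ) * |x j| ≤ S := h1
          _ = (t:ℝ) * ((t:ℝ)⁻¹ * S) := by field_simp
      have hsum : ∑ i, (restr x (T (k+1)) i) ^ 2 ≤ S ^ 2 / t := by
        rw [sq_sum_restr]
        calc ∑ i ∈ T (k+1), (x i) ^ 2 ≤ ∑ i ∈ T (k+1), (S / t) ^ 2 := by
              apply Finset.sum_le_sum
              intro i hi
              rw [← sq_abs (x i)]
              exact pow_le_pow_left₀ (abs_nonneg _) (hentry i hi) 2
          _ = (T (k+1)).card * (S / t) ^ 2 := by rw [Finset.sum_const, nsmul_eq_mul]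
          _ ≤ t * (S / t) ^ 2 := by
              apply mul_le_mul_of_nonneg_right _ (by positivity)
              exact_mod_cast hcard_le (k+1)
          _ = S ^ 2 / t := by field_simp
      unfold norm2
      calc Real.sqrt (∑ i, (restr x (T (k+1)) i) ^ 2) ≤ Real.sqrt (S ^ 2 / t) :=
            Real.sqrt_le_sqrt hsum
        _ = S / Real.sqrt t := by
            rw [Real.sqrt_div (by positivity), Real.sqrt_sq hS0]
  refine ⟨key, ?_⟩
  -- finitely many nonempty blocks
  have hfin : {k : ℕ | (T k).Nonempty}.Finite := by
    rw [← Set.finite_coe_iff]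
    have : Function.Injective (fun k : {k : ℕ | (T k).Nonempty} => (k.2.choose : Fin N)) := by
      intro a b hab
      by_contra hne
      have hd := hdisj a.1 b.1 (fun h => hne (Subtype.ext h))
      have hb := b.2.choose_spec
      simp only at hab
      rw [← hab] at hb
      exact (Finset.disjoint_left.mp hd a.2.choose_spec) hb
    exact Finite.of_injective _ this
  have hsupp2 : (Function.support fun k => norm2 (restr x (T (k+1)))).Finite := by
    apply (hfin.preimage (f := fun k : ℕ => k + 1) (fun a _ b _ h => Nat.succ_injective h)).subset
    intro k hk
    simp only [Function.mem_support] at hk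
    by_contra h
    simp only [Set.mem_preimage, Set.mem_setOf_eq, Finset.not_nonempty_iff_eq_empty] at h
    apply hk
    unfold norm2
    rw [sq_sum_restr, h]
    simp
  have hsupp1 : (Function.support fun k => norm1 (restr x (T k)) / Real.sqrt t).Finite := by
    apply hfin.subset
    intro k hk
    simp only [Function.mem_support] at hk
    by_contra h
    simp only [Set.mem_setOf_eq, Finset.not_nonempty_iff_eq_empty] at h
    apply hk
    rw [norm1_restr, h]
    simp
  have hsum2 : Summable fun k => norm2 (restr x (T (k+1))) := summable_of_finite_support hsupp2
  have hsum1 : Summable fun k => norm1 (restr x (T k)) / Real.sqrt t :=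
    summable_of_finite_support hsupp1
  calc (∑' k : ℕ, norm2 (restr x (T (k + 1))))
      ≤ ∑' k : ℕ, norm1 (restr x (T k)) / Real.sqrt t := Summable.tsum_le_tsum key hsum2 hsum1
    _ = (∑' k : ℕ, norm1 (restr x (T k))) / Real.sqrt t := tsum_div_const
    _ = norm1 x / Real.sqrt t := by
        congr 1
        set s := hfin.toFinset with hs
        rw [tsum_eq_sum (s := s) (fun k hk => by
          simp only [hs, Set.Finite.mem_toFinset, Set.mem_setOf_eq,
            Finset.not_nonempty_iff_eq_empty] at hk
          rw [norm1_restr, hk]; simp)]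
        have hbi : s.biUnion T = Finset.univ := by
          apply Finset.eq_univ_of_forall
          intro i
          obtain ⟨k, hk⟩ := hunion i
          exact Finset.mem_biUnion.mpr ⟨k, by simp [hs, Set.Finite.mem_toFinset]; exact ⟨⟨i, hk⟩, hk⟩⟩
        calc ∑ k ∈ s, norm1 (restr x (T k)) = ∑ k ∈ s, ∑ i ∈ T k, |x i| := by
              apply Finset.sum_congr rfl; intro k _; exact norm1_restr x (T k)
          _ = ∑ i ∈ s.biUnion T, |x i| :=
              (Finset.sum_biUnion (fun a _ b _ h => hdisj a b h)).symm
          _ = norm1 x := by rw [hbi]; rfl
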